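/- Let 1 < p < ∞ with conjugate exponent p′ = p/(p−1), and let u, w be weights on ℝ and (0,∞) respectively. Assume that W(t)/t is quasi-increasing (there is C with W(t)/t ≤ C·W(s)/s for all 0 < t ≤ s), that w ∈ B*_∞, and that there is C such that for every bounded interval I, (∫_0^{u(I)} (φ_I(t)/W(t))^{p′} w(t) dt)^{1/p′} ≤ C |I| / W(u(I))^{1/p}, where φ_I(t) = sup{ |E| : E ⊆ I measurable, u(E) = t }. Then there is a constant C′ such that for every bounded interval I, (∫_0^{u(I)} (φ_I(t)/t)^{p′} dt)^{1/p′} ≤ C′ |I| / u(I)^{1/p}. -/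

import Mathlib

open MeasureTheory Filter Topology
open scoped ENNReal NNReal

noncomputable section

/-- The `u`-measure of a set `E`, `u(E) = ∫_E u`, as an extended nonnegative real. -/
def wMeas (u : ℝ → ℝ) (E : Set ℝ) : ℝ≥0∞ := ∫⁻ x in E, ENNReal.ofReal (u x)

/-- The `u`-measure of a set `E`, `u(E) = ∫_E u(x) dx`, as a real number. -/
def wInt (u : ℝ → ℝ) (E : Set ℝ) : ℝ := ∫ x in E, u x

/-- `W(r) = ∫_0^r w(s) ds`. -/
def Wf (w : ℝ → ℝ) (r : ℝ) : ℝ := ∫ t in Set.Ioo (0:ℝ) r, w t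

/-- A weight on `ℝ`: a positive locally integrable function. -/
def IsWeight (u : ℝ → ℝ) : Prop :=
  (∀ x, 0 < u x) ∧ MeasureTheory.LocallyIntegrable u volume

/-- A weight on `(0,∞)`: positive there and locally integrable on `(0,r)` for every `r > 0`. -/
def IsWeightOn (w : ℝ → ℝ) : Prop :=
  (∀ t, 0 < t → 0 < w t) ∧ ∀ r, 0 < r → MeasureTheory.IntegrableOn w (Set.Ioo (0:ℝ) r) volume

/-- Decreasing rearrangement (with respect to the weight `u`) of an `ℝ≥0∞`-valued function. -/
def rearrE (u : ℝ → ℝ) (g : ℝ → ℝ≥0∞) (t : ℝ) : ℝ≥0∞ :=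
  sInf {s : ℝ≥0∞ | wMeas u {x | s < g x} ≤ ENNReal.ofReal t}

/-- Decreasing rearrangement `f*_u` of `f` with respect to the weight `u`. -/
def rearr (u f : ℝ → ℝ) (t : ℝ) : ℝ≥0∞ :=
  rearrE u (fun x => ENNReal.ofReal |f x|) t

/-- The quasinorm of `Λ^p_u(w)` for `ℝ≥0∞`-valued functions. -/
def lorentzNormE (p : ℝ) (u w : ℝ → ℝ) (g : ℝ → ℝ≥0∞) : ℝ≥0∞ :=
  (∫⁻ t in Set.Ioi (0:ℝ), rearrE u g t ^ p * ENNReal.ofReal (w t)) ^ (1/p)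

/-- The quasinorm of the weighted Lorentz space `Λ^p_u(w)`. -/
def lorentzNorm (p : ℝ) (u w f : ℝ → ℝ) : ℝ≥0∞ :=
  lorentzNormE p u w (fun x => ENNReal.ofReal |f x|)

/-- The quasinorm of `Λ^{p,∞}_u(w)` for `ℝ≥0∞`-valued functions. -/
def weakLorentzNormE (p : ℝ) (u w : ℝ → ℝ) (g : ℝ → ℝ≥0∞) : ℝ≥0∞ :=
  ⨆ t ∈ Set.Ioi (0:ℝ), ENNReal.ofReal (Wf w t) ^ (1/p) * rearrE u g t

/-- The quasinorm of the weak weighted Lorentz space `Λ^{p,∞}_u(w)`. -/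
def weakLorentzNorm (p : ℝ) (u w f : ℝ → ℝ) : ℝ≥0∞ :=
  weakLorentzNormE p u w (fun x => ENNReal.ofReal |f x|)

/-- Membership in `Λ^p_u(w)`. -/
def MemLambda (p : ℝ) (u w f : ℝ → ℝ) : Prop :=
  Measurable f ∧ lorentzNorm p u w f < ∞

/-- The quasinorm of the Lorentz space `L^{p,q}(u)`, `0 < q ≤ ∞`. -/
def lpqNorm (p : ℝ) (q : ℝ≥0∞) (u f : ℝ → ℝ) : ℝ≥0∞ :=
  if q = ∞ then ⨆ t ∈ Set.Ioi (0:ℝ), ENNReal.ofReal t ^ (1/p) * rearr u f t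
  else (∫⁻ t in Set.Ioi (0:ℝ),
      (ENNReal.ofReal t ^ (1/p) * rearr u f t) ^ q.toReal / ENNReal.ofReal t) ^ (1/q.toReal)

/-- Membership in `L^{p,q}(u)`. -/
def MemLpq (p : ℝ) (q : ℝ≥0∞) (u f : ℝ → ℝ) : Prop :=
  Measurable f ∧ lpqNorm p q u f < ∞

/-- The associate norm `‖g‖_{(Λ^p_u(w))'}`. -/
def assocNorm (p : ℝ) (u w g : ℝ → ℝ) : ℝ≥0∞ :=
  ⨆ (f : ℝ → ℝ) (_ : MemLambda p u w f) (_ : lorentzNorm p u w f ≠ 0),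
    ENNReal.ofReal |∫ x, f x * g x * u x| / lorentzNorm p u w f

/-- The truncated Hilbert integral `∫_{|x−y|>ε} f(y)/(x−y) dy`. -/
def pvIntegral (f : ℝ → ℝ) (x ε : ℝ) : ℝ :=
  ∫ y in {y : ℝ | ε < |x - y|}, f y / (x - y)

/-- The principal value limit defining `Hf(x)` exists and equals `L`. -/
def HasHilbert (f : ℝ → ℝ) (x L : ℝ) : Prop :=
  Filter.Tendsto (fun ε : ℝ => (1 / Real.pi) * pvIntegral f x ε) (𝓝[>] 0) (𝓝 L)

/-- The Hilbert transform `Hf(x)` (junk value where the principal value does not exist). -/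
def hilbert (f : ℝ → ℝ) (x : ℝ) : ℝ :=
  limUnder (𝓝[>] (0:ℝ)) (fun ε => (1 / Real.pi) * pvIntegral f x ε)

/-- The Hilbert maximal operator `H*f(x)`. -/
def hilbertMax (f : ℝ → ℝ) (x : ℝ) : ℝ≥0∞ :=
  ⨆ ε ∈ Set.Ioi (0:ℝ), ENNReal.ofReal ((1 / Real.pi) * |pvIntegral f x ε|)

/-- The Hardy–Littlewood maximal operator over intervals of `ℝ`. -/
def maxOp (u : ℝ → ℝ) (x : ℝ) : ℝ≥0∞ :=
  ⨆ (a : ℝ) (b : ℝ) (_ : x ∈ Set.Ioo a b),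
    (∫⁻ y in Set.Ioo a b, ENNReal.ofReal |u y|) / ENNReal.ofReal (b - a)

/-- The Muckenhoupt class `A_1`: `Mu ≤ C u` a.e. -/
def A1 (u : ℝ → ℝ) : Prop :=
  ∃ C : ℝ, 0 < C ∧ ∀ᵐ x : ℝ ∂volume, maxOp u x ≤ ENNReal.ofReal (C * u x)

/-- The Muckenhoupt class `A_p`, `p > 1`. -/
def Ap (p : ℝ) (u : ℝ → ℝ) : Prop :=
  ∃ C : ℝ, 0 < C ∧ ∀ a b : ℝ, a < b →
    ((∫⁻ x in Set.Ioo a b, ENNReal.ofReal (u x)) / ENNReal.ofReal (b - a)) *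
      ((∫⁻ x in Set.Ioo a b, ENNReal.ofReal (u x ^ (-1 / (p - 1)))) /
        ENNReal.ofReal (b - a)) ^ (p - 1)
      ≤ ENNReal.ofReal C

/-- The class `B_p`: `∫_r^∞ (r/t)^p w(t) dt ≤ C W(r)`. -/
def Bp (p : ℝ) (w : ℝ → ℝ) : Prop :=
  ∃ C : ℝ, 0 < C ∧ ∀ r : ℝ, 0 < r →
    (∫⁻ t in Set.Ioi r, ENNReal.ofReal ((r / t) ^ p * w t)) ≤ ENNReal.ofReal (C * Wf w r)

/-- The class `B_{p,∞}`: the Hardy operator maps `L^p_dec(w)` to `L^{p,∞}(w)`. -/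
def BpInfty (p : ℝ) (w : ℝ → ℝ) : Prop :=
  ∃ C : ℝ, 0 < C ∧ ∀ f : ℝ → ℝ, (∀ t, 0 < t → 0 ≤ f t) → AntitoneOn f (Set.Ioi 0) →
    ∀ t : ℝ, 0 < t →
      ENNReal.ofReal (Wf w t) ^ (1/p) *
          ((∫⁻ s in Set.Ioo (0:ℝ) t, ENNReal.ofReal (f s)) / ENNReal.ofReal t)
        ≤ ENNReal.ofReal C *
            (∫⁻ s in Set.Ioi (0:ℝ), ENNReal.ofReal (f s) ^ p * ENNReal.ofReal (w s)) ^ (1/p)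

/-- The class `B*_∞`: `∫_0^r W(t)/t dt ≤ C W(r)`. -/
def BstarInfty (w : ℝ → ℝ) : Prop :=
  ∃ C : ℝ, 0 < C ∧ ∀ r : ℝ, 0 < r →
    (∫⁻ t in Set.Ioo (0:ℝ) r, ENNReal.ofReal (Wf w t / t)) ≤ ENNReal.ofReal (C * Wf w r)

/-- The `Δ_2` condition: `W(2r) ≤ C W(r)`. -/
def Delta2 (w : ℝ → ℝ) : Prop :=
  ∃ C : ℝ, 0 < C ∧ ∀ r : ℝ, 0 < r → Wf w (2 * r) ≤ C * Wf w r

/-- A doubling weight on `ℝ`: `u(2I) ≤ C u(I)` for every bounded interval `I`. -/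
def DoublingWeight (u : ℝ → ℝ) : Prop :=
  ∃ C : ℝ, 0 < C ∧ ∀ c r : ℝ, 0 < r →
    wInt u (Set.Ioo (c - 2*r) (c + 2*r)) ≤ C * wInt u (Set.Ioo (c - r) (c + r))

/-- `φ_I(t) = sup{|E| : E ⊆ I, u(E) = t}` for `I = (a,b)`. -/
def phiI (u : ℝ → ℝ) (a b t : ℝ) : ℝ :=
  sSup {m : ℝ | ∃ E : Set ℝ, MeasurableSet E ∧ E ⊆ Set.Ioo a b ∧
    wInt u E = t ∧ (volume E).toReal = m}

/-- The index `p_w`:  `inf{p > 0 : t^p/W(t) ∈ L^{p'-1}((0,1), dt/t)}`, where for `p ≤ 1`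
(`p' = ∞`) the condition means essential boundedness on `(0,1)`. -/
def pwIndex (w : ℝ → ℝ) : ℝ :=
  sInf {p : ℝ | 0 < p ∧
    ((p ≤ 1 ∧ ∃ C : ℝ, ∀ᵐ t ∂(volume.restrict (Set.Ioo (0:ℝ) 1)), t ^ p / Wf w t ≤ C) ∨
     (1 < p ∧ (∫⁻ t in Set.Ioo (0:ℝ) 1,
        ENNReal.ofReal ((t ^ p / Wf w t) ^ (1 / (p - 1)) / t)) < ∞))}

section AuxPhi

open Set

variable {u : ℝ → ℝ} {a b : ℝ}

lemma aux_integrableOn_of_subset_Ioo (hu : IsWeight u) {E : Set ℝ} (hE : E ⊆ Set.Ioo a b) :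
    MeasureTheory.IntegrableOn u E volume := by
  have h1 : MeasureTheory.IntegrableOn u (Set.Icc a b) volume :=
    hu.2.integrableOn_isCompact isCompact_Icc
  exact h1.mono_set (hE.trans Set.Ioo_subset_Icc_self)

lemma aux_wInt_nonneg (hu : IsWeight u) (E : Set ℝ) : 0 ≤ wInt u E :=
  MeasureTheory.integral_nonneg fun x => (hu.1 x).le

lemma aux_vol_ne_top {E : Set ℝ} (hE : E ⊆ Set.Ioo a b) : volume E ≠ ∞ :=
  ((measure_mono hE).trans_lt measure_Ioo_lt_top).ne

lemma aux_vol_zero (hu : IsWeight u) {E : Set ℝ} (hEm : MeasurableSet E)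
    (hE : E ⊆ Set.Ioo a b) (h0 : wInt u E ≤ 0) : volume E = 0 := by
  have hint := aux_integrableOn_of_subset_Ioo hu hE
  have h0' : wInt u E = 0 := le_antisymm h0 (aux_wInt_nonneg hu E)
  have hae : u =ᵐ[volume.restrict E] 0 :=
    (MeasureTheory.integral_eq_zero_iff_of_nonneg_ae
      (Filter.Eventually.of_forall fun x => (hu.1 x).le) hint).mp h0'
  have h2 : (volume.restrict E) {x | u x ≠ 0} = 0 := by
    simpa [Filter.EventuallyEq, MeasureTheory.ae_iff] using hae
  have h3 : {x : ℝ | u x ≠ 0} = Set.univ := Set.eq_univ_of_forall fun x => (hu.1 x).ne'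
  rw [h3] at h2
  rwa [MeasureTheory.Measure.restrict_apply_univ] at h2

lemma aux_wInt_split (hu : IsWeight u) {E C : Set ℝ} (hEm : MeasurableSet E)
    (hCm : MeasurableSet C) (hE : E ⊆ Set.Ioo a b) :
    wInt u E = wInt u (E ∩ C) + wInt u (E \ C) := by
  have h1 : MeasureTheory.IntegrableOn u (E ∩ C) volume :=
    (aux_integrableOn_of_subset_Ioo hu hE).mono_set Set.inter_subset_left
  have h2 : MeasureTheory.IntegrableOn u (E \ C) volume :=
    (aux_integrableOn_of_subset_Ioo hu hE).mono_set Set.diff_subset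
  have hd : Disjoint (E ∩ C) (E \ C) :=
    (disjoint_sdiff_self_right).mono_left Set.inter_subset_right
  rw [wInt, wInt, wInt, ← MeasureTheory.setIntegral_union hd (hEm.diff hCm) h1 h2,
    Set.inter_union_diff]

lemma aux_vol_split {E C : Set ℝ} (hEm : MeasurableSet E) (hCm : MeasurableSet C)
    (hE : E ⊆ Set.Ioo a b) :
    (volume E).toReal = (volume (E ∩ C)).toReal + (volume (E \ C)).toReal := by
  have hd : Disjoint (E ∩ C) (E \ C) :=
    (disjoint_sdiff_self_right).mono_left Set.inter_subset_right
  rw [← ENNReal.toReal_add (aux_vol_ne_top (Set.inter_subset_left.trans hE))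
    (aux_vol_ne_top (Set.diff_subset.trans hE)),
    ← measure_union hd (hEm.diff hCm), Set.inter_union_diff]

lemma aux_exists_cut (hu : IsWeight u) (hab : a < b) {E : Set ℝ} (hEm : MeasurableSet E)
    (hE : E ⊆ Set.Ioo a b) {c : ℝ} (hc0 : 0 ≤ c) (hcE : c ≤ wInt u E) :
    ∃ x : ℝ, wInt u (E ∩ Set.Ioc a x) = c := by
  set f : ℝ → ℝ := E.indicator u with hf
  have hint : ∀ c d : ℝ, IntervalIntegrable f volume c d := by
    intro c d
    have h1 : MeasureTheory.IntegrableOn u (Set.uIcc c d) volume :=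
      hu.2.integrableOn_isCompact isCompact_uIcc
    have h2 : MeasureTheory.IntegrableOn f (Set.uIcc c d) volume := h1.indicator hEm
    exact h2.intervalIntegrable
  set F : ℝ → ℝ := fun x => ∫ t in a..x, f t with hF
  have hcont : Continuous F := intervalIntegral.continuous_primitive hint a
  have hFval : ∀ x, a ≤ x → F x = wInt u (E ∩ Set.Ioc a x) := by
    intro x hx
    rw [hF]
    simp only
    rw [intervalIntegral.integral_of_le hx, hf,
      MeasureTheory.setIntegral_indicator hEm, wInt, Set.inter_comm]
  have hFa : F a = 0 := by simp [hF]
  have hFb : F b = wInt u E := by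
    rw [hFval b hab.le]
    congr 1
    exact Set.inter_eq_self_of_subset_left (hE.trans fun x hx => ⟨hx.1, hx.2.le⟩)
  have hmem : c ∈ Set.Icc (F a) (F b) := by rw [hFa, hFb]; exact ⟨hc0, hcE⟩
  obtain ⟨x, hx, hFx⟩ := intermediate_value_Icc hab.le hcont.continuousOn hmem
  exact ⟨x, by rw [← hFval x hx.1, hFx]⟩

lemma aux_phiI_bddAbove (hab : a < b) (t : ℝ) :
    BddAbove {m : ℝ | ∃ E : Set ℝ, MeasurableSet E ∧ E ⊆ Set.Ioo a b ∧
      wInt u E = t ∧ (volume E).toReal = m} := by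
  refine ⟨b - a, ?_⟩
  rintro m ⟨E, hEm, hE, -, rfl⟩
  calc (volume E).toReal ≤ (volume (Set.Ioo a b)).toReal :=
        ENNReal.toReal_mono (by simp) (measure_mono hE)
    _ = b - a := by simp [Real.volume_Ioo, ENNReal.toReal_ofReal (by linarith : (0:ℝ) ≤ b - a)]

lemma aux_phiI_nonneg (t : ℝ) : 0 ≤ phiI u a b t := by
  apply Real.sSup_nonneg
  rintro m ⟨E, -, -, -, rfl⟩
  exact ENNReal.toReal_nonneg

lemma aux_key1 (hu : IsWeight u) (hab : a < b) {E : Set ℝ} (hEm : MeasurableSet E)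
    (hE : E ⊆ Set.Ioo a b) {t : ℝ} (hEt : wInt u E ≤ t)
    (htr : t ≤ wInt u (Set.Ioo a b)) : (volume E).toReal ≤ phiI u a b t := by
  have hsplit := aux_wInt_split hu (measurableSet_Ioo (a := a) (b := b)) hEm
    (le_refl (Set.Ioo a b))
  rw [Set.inter_eq_self_of_subset_right hE] at hsplit
  have hcE' : t - wInt u E ≤ wInt u (Set.Ioo a b \ E) := by linarith
  obtain ⟨x, hx⟩ := aux_exists_cut hu hab (measurableSet_Ioo.diff hEm) Set.diff_subset
    (by linarith : (0:ℝ) ≤ t - wInt u E) hcE'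
  set Fs : Set ℝ := (Set.Ioo a b \ E) ∩ Set.Ioc a x with hFs
  have hFm : MeasurableSet Fs := (measurableSet_Ioo.diff hEm).inter measurableSet_Ioc
  have hFsub : Fs ⊆ Set.Ioo a b := Set.inter_subset_left.trans Set.diff_subset
  have hdisj : Disjoint E Fs := by
    have : Disjoint E (Set.Ioo a b \ E) := disjoint_sdiff_self_right
    exact this.mono_right Set.inter_subset_left
  have hEF : wInt u (E ∪ Fs) = t := by
    rw [wInt, MeasureTheory.setIntegral_union hdisj hFm
      (aux_integrableOn_of_subset_Ioo hu hE) (aux_integrableOn_of_subset_Ioo hu hFsub)]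
    have h1 : (∫ y in Fs, u y) = t - wInt u E := hx
    have h2 : (∫ y in E, u y) = wInt u E := rfl
    rw [h1, h2]; ring
  have hmem : (volume (E ∪ Fs)).toReal ∈ {m : ℝ | ∃ E : Set ℝ, MeasurableSet E ∧
      E ⊆ Set.Ioo a b ∧ wInt u E = t ∧ (volume E).toReal = m} :=
    ⟨E ∪ Fs, hEm.union hFm, Set.union_subset hE hFsub, hEF, rfl⟩
  have hle : (volume E).toReal ≤ (volume (E ∪ Fs)).toReal :=
    ENNReal.toReal_mono (aux_vol_ne_top (Set.union_subset hE hFsub))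
      (measure_mono Set.subset_union_left)
  exact hle.trans (le_csSup (aux_phiI_bddAbove hab t) hmem)

lemma aux_key2 (hu : IsWeight u) (hab : a < b) {t : ℝ} (ht0 : 0 < t)
    (htr : t ≤ wInt u (Set.Ioo a b)) :
    ∀ n : ℕ, ∀ E : Set ℝ, MeasurableSet E → E ⊆ Set.Ioo a b → wInt u E ≤ n * t →
      (volume E).toReal ≤ n * phiI u a b t := by
  intro n
  induction n with
  | zero =>
    intro E hEm hE h
    simp only [Nat.cast_zero, zero_mul] at h ⊢
    rw [aux_vol_zero hu hEm hE h]; simp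
  | succ n ih =>
    intro E hEm hE h
    by_cases hc : wInt u E ≤ t
    · have h1 := aux_key1 hu hab hEm hE hc htr
      have h2 := aux_phiI_nonneg (u := u) (a := a) (b := b) t
      have h3 : (1:ℝ) ≤ ((n:ℝ) + 1) := by linarith [Nat.cast_nonneg (α := ℝ) n]
      push_cast
      nlinarith
    · push_neg at hc
      obtain ⟨x, hx⟩ := aux_exists_cut hu hab hEm hE ht0.le hc.le
      have hsplit := aux_wInt_split hu hEm (measurableSet_Ioc (a := a) (b := x)) hE
      have h2le : wInt u (E \ Set.Ioc a x) ≤ n * t := by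
        rw [hsplit, hx] at h
        push_cast at h
        linarith
      have hE1 : (volume (E ∩ Set.Ioc a x)).toReal ≤ phiI u a b t :=
        le_csSup (aux_phiI_bddAbove hab t)
          ⟨E ∩ Set.Ioc a x, hEm.inter measurableSet_Ioc,
            Set.inter_subset_left.trans hE, hx, rfl⟩
      have hE2 := ih (E \ Set.Ioc a x) (hEm.diff measurableSet_Ioc)
        (Set.diff_subset.trans hE) h2le
      have hv := aux_vol_split hEm (measurableSet_Ioc (a := a) (b := x)) hE
      push_cast
      linarith

lemma aux_phi_ratio (hu : IsWeight u) (hab : a < b) {t s : ℝ} (ht : 0 < t) (hts : t ≤ s)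
    (hsr : s ≤ wInt u (Set.Ioo a b)) :
    phiI u a b s ≤ 2 * (s / t) * phiI u a b t := by
  have hphinn := aux_phiI_nonneg (u := u) (a := a) (b := b) t
  have h1t : 1 ≤ s / t := (one_le_div ht).mpr hts
  have hrhs : 0 ≤ 2 * (s / t) * phiI u a b t := by positivity
  apply Real.sSup_le _ hrhs
  rintro m ⟨E, hEm, hE, hEs, rfl⟩
  have hn : wInt u E ≤ (⌈s / t⌉₊ : ℝ) * t := by
    rw [hEs]
    calc s = (s / t) * t := by field_simp
      _ ≤ (⌈s / t⌉₊ : ℝ) * t := by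
          have := Nat.le_ceil (s / t)
          nlinarith
  have hkey := aux_key2 hu hab ht (hts.trans hsr) ⌈s / t⌉₊ E hEm hE hn
  have hceil : (⌈s / t⌉₊ : ℝ) ≤ s / t + 1 := (Nat.ceil_lt_add_one (by positivity)).le
  nlinarith

end AuxPhi

section AuxWf

open Set MeasureTheory

variable {w : ℝ → ℝ}

lemma aux_Wf_nonneg (hw : IsWeightOn w) (r : ℝ) : 0 ≤ Wf w r := by
  apply MeasureTheory.setIntegral_nonneg measurableSet_Ioo
  intro x hx
  exact (hw.1 x hx.1).le

lemma aux_Wf_pos (hw : IsWeightOn w) {r : ℝ} (hr : 0 < r) : 0 < Wf w r := by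
  rw [Wf]
  rw [MeasureTheory.setIntegral_pos_iff_support_of_nonneg_ae
    ((MeasureTheory.ae_restrict_iff' measurableSet_Ioo).mpr
      (Filter.Eventually.of_forall fun x hx => (hw.1 x hx.1).le)) (hw.2 r hr)]
  have hsub : Set.Ioo (0:ℝ) r ⊆ Function.support w ∩ Set.Ioo 0 r :=
    fun x hx => ⟨(hw.1 x hx.1).ne', hx⟩
  calc (0:ℝ≥0∞) < ENNReal.ofReal r := by simpa using hr
    _ = volume (Set.Ioo (0:ℝ) r) := by simp [Real.volume_Ioo]
    _ ≤ _ := measure_mono hsub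

lemma aux_Wf_mono (hw : IsWeightOn w) : Monotone (Wf w) := by
  intro r1 r2 h
  rcases le_or_gt r2 0 with h2 | h2
  · have e1 : Set.Ioo (0:ℝ) r1 = ∅ := Set.Ioo_eq_empty (by intro hlt; linarith [hlt.trans_le (h.trans h2)])
    have e2 : Set.Ioo (0:ℝ) r2 = ∅ := Set.Ioo_eq_empty (by intro hlt; linarith)
    rw [Wf, Wf, e1, e2]
  · rcases le_or_gt r1 0 with h1 | h1
    · have e1 : Set.Ioo (0:ℝ) r1 = ∅ := Set.Ioo_eq_empty (by intro hlt; linarith)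
      rw [Wf, Wf, e1]
      simpa [Wf] using aux_Wf_nonneg hw r2
    · exact MeasureTheory.setIntegral_mono_set (hw.2 r2 h2)
        ((MeasureTheory.ae_restrict_iff' measurableSet_Ioo).mpr
          (Filter.Eventually.of_forall fun x hx => (hw.1 x hx.1).le))
        (HasSubset.Subset.eventuallyLE (Set.Ioo_subset_Ioo_right h))

lemma aux_Wf_measurable (hw : IsWeightOn w) : Measurable (Wf w) :=
  (aux_Wf_mono hw).measurable

end AuxWf

/-- if `W(t)/t` is quasi-increasing, `w ∈ B*_∞` and the generalized Hardy
condition holds, then the corresponding `w = 1` condition (the `A_p`-type condition) holds. -/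
theorem Ap_type_condition_of_genHardy (p : ℝ) (hp : 1 < p) (u w : ℝ → ℝ)
    (hu : IsWeight u) (hw : IsWeightOn w)
    (hqi : ∃ C₀ : ℝ, 0 < C₀ ∧ ∀ t s : ℝ, 0 < t → t ≤ s → Wf w t / t ≤ C₀ * (Wf w s / s))
    (hBstar : BstarInfty w)
    (hmain : ∃ C : ℝ, 0 < C ∧ ∀ a b : ℝ, a < b →
      (∫⁻ t in Set.Ioo (0:ℝ) (wInt u (Set.Ioo a b)),
          ENNReal.ofReal ((phiI u a b t / Wf w t) ^ (p/(p-1)) * w t)) ^ ((p-1)/p)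
        ≤ ENNReal.ofReal (C * (b - a) / Wf w (wInt u (Set.Ioo a b)) ^ (1/p))) :
    ∃ C' : ℝ, 0 < C' ∧ ∀ a b : ℝ, a < b →
      (∫⁻ t in Set.Ioo (0:ℝ) (wInt u (Set.Ioo a b)),
          ENNReal.ofReal ((phiI u a b t / t) ^ (p/(p-1)))) ^ ((p-1)/p)
        ≤ ENNReal.ofReal (C' * (b - a) / wInt u (Set.Ioo a b) ^ (1/p)) := by
  obtain ⟨C₀, hC₀, hqi'⟩ := hqi
  obtain ⟨CB, hCB, hB⟩ := hBstar
  obtain ⟨C, hC, hm⟩ := hmain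
  have hp1 : 0 < p - 1 := by linarith
  have hp0 : 0 < p := by linarith
  set p' : ℝ := p / (p - 1) with hp'def
  have hp'1 : 1 < p' := by rw [hp'def, lt_div_iff₀ hp1]; linarith
  have hp'0 : 0 < p' := by linarith
  have hq0 : 0 < (p - 1) / p := by positivity
  refine ⟨2 * C₀ * C₀ ^ (1/p) * CB ^ ((p-1)/p) * C, by positivity, ?_⟩
  intro a b hab
  set r : ℝ := wInt u (Set.Ioo a b) with hrdef
  have hIab : MeasureTheory.IntegrableOn u (Set.Ioo a b) volume :=
    aux_integrableOn_of_subset_Ioo hu (le_refl _)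
  have hr : 0 < r := by
    rw [hrdef, wInt]
    rw [MeasureTheory.setIntegral_pos_iff_support_of_nonneg_ae
      (Filter.Eventually.of_forall fun x => (hu.1 x).le) hIab]
    have hsupp : Function.support u ∩ Set.Ioo a b = Set.Ioo a b := by
      apply Set.inter_eq_self_of_subset_right
      intro x _
      exact (hu.1 x).ne'
    rw [hsupp]
    simp [Real.volume_Ioo, hab]
  have hWr : 0 < Wf w r := aux_Wf_pos hw hr
  have hφnn : ∀ t : ℝ, 0 ≤ phiI u a b t := fun t => aux_phiI_nonneg t
  have hQnn : ∀ t : ℝ, 0 ≤ (phiI u a b t / Wf w t) ^ p' :=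
    fun t => Real.rpow_nonneg (div_nonneg (hφnn t) (aux_Wf_nonneg hw t)) _
  -- quasi-decreasingness of φ/W
  have hqd : ∀ t s : ℝ, 0 < t → t ≤ s → s ≤ r →
      phiI u a b s / Wf w s ≤ 2 * C₀ * (phiI u a b t / Wf w t) := by
    intro t s ht hts hsr
    have hs : 0 < s := ht.trans_le hts
    have hWs := aux_Wf_pos hw hs
    have hWt := aux_Wf_pos hw ht
    have hratio := aux_phi_ratio hu hab ht hts (by rw [hrdef] at hsr; exact hsr)
    have hkey : Wf w t * s ≤ C₀ * Wf w s * t := by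
      have h1 := hqi' t s ht hts
      rw [div_le_iff₀ ht] at h1
      have h2 : C₀ * (Wf w s / s) * t * s = C₀ * Wf w s * t := by field_simp
      nlinarith
    calc phiI u a b s / Wf w s ≤ (2 * (s / t) * phiI u a b t) / Wf w s :=
          (div_le_div_iff_of_pos_right hWs).mpr hratio
      _ ≤ 2 * C₀ * (phiI u a b t / Wf w t) := by
          rw [show (2:ℝ) * C₀ * (phiI u a b t / Wf w t) = 2 * C₀ * phiI u a b t / Wf w t by ring,
            div_le_div_iff₀ hWs hWt,
            show (2:ℝ) * (s / t) * phiI u a b t * Wf w t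
              = 2 * s * phiI u a b t * Wf w t / t by ring,
            div_le_iff₀ ht]
          nlinarith [mul_le_mul_of_nonneg_left hkey
            (by linarith [hφnn t] : (0:ℝ) ≤ 2 * phiI u a b t)]
  -- the antitone envelope of Q
  set h : ℝ → ℝ := fun t => sSup ((fun s => (phiI u a b s / Wf w s) ^ p') '' Set.Ico t r)
    with hhdef
  have hub : ∀ t : ℝ, 0 < t →
      ∀ y ∈ (fun s => (phiI u a b s / Wf w s) ^ p') '' Set.Ico t r,
        y ≤ (2*C₀) ^ p' * (phiI u a b t / Wf w t) ^ p' := by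
    rintro t ht y ⟨s, hs, rfl⟩
    have h1 : (phiI u a b s / Wf w s) ^ p' ≤ (2 * C₀ * (phiI u a b t / Wf w t)) ^ p' :=
      Real.rpow_le_rpow (div_nonneg (hφnn s) (aux_Wf_nonneg hw s))
        (hqd t s ht hs.1 hs.2.le) hp'0.le
    rwa [Real.mul_rpow (by positivity) (div_nonneg (hφnn t) (aux_Wf_nonneg hw t))] at h1
  have hbdd : ∀ t : ℝ, 0 < t →
      BddAbove ((fun s => (phiI u a b s / Wf w s) ^ p') '' Set.Ico t r) :=
    fun t ht => ⟨_, hub t ht⟩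
  have hhub : ∀ t : ℝ, 0 < t → h t ≤ (2*C₀) ^ p' * (phiI u a b t / Wf w t) ^ p' := by
    intro t ht
    exact Real.sSup_le (hub t ht) (mul_nonneg (Real.rpow_nonneg (by positivity) _) (hQnn t))
  have hQh : ∀ t : ℝ, 0 < t → t < r → (phiI u a b t / Wf w t) ^ p' ≤ h t :=
    fun t ht htr => le_csSup (hbdd t ht) ⟨t, ⟨le_refl t, htr⟩, rfl⟩
  have hhnn : ∀ t : ℝ, 0 ≤ h t := by
    intro t
    apply Real.sSup_nonneg
    rintro y ⟨s, -, rfl⟩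
    exact hQnn s
  have hanti : AntitoneOn h (Set.Ioi (0:ℝ)) := by
    intro t ht t' ht' htt'
    rcases lt_or_ge t' r with h2 | h2
    · exact csSup_le_csSup (hbdd t ht) ⟨_, ⟨t', ⟨le_refl _, h2⟩, rfl⟩⟩
        (Set.image_mono (Set.Ico_subset_Ico_left htt'))
    · have he : Set.Ico t' r = ∅ := Set.Ico_eq_empty (not_lt.mpr h2)
      show sSup _ ≤ h t
      rw [he]
      simp only [Set.image_empty, Real.sSup_empty]
      exact hhnn t
  -- a.e. measurability of h on (0, r)
  have haemeas : AEMeasurable h (volume.restrict (Set.Ioo (0:ℝ) r)) := by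
    have hmeas : ∀ n : ℕ, Measurable (fun x => h (max x (r / ((n:ℝ) + 2)))) := by
      intro n
      have hpos : 0 < r / ((n:ℝ) + 2) := by positivity
      have hmono : Antitone (fun x => h (max x (r / ((n:ℝ) + 2)))) := by
        intro x y hxy
        exact hanti (Set.mem_Ioi.mpr (lt_max_of_lt_right hpos))
          (Set.mem_Ioi.mpr (lt_max_of_lt_right hpos)) (max_le_max hxy (le_refl _))
      exact hmono.measurable
    apply aemeasurable_of_tendsto_metrizable_ae Filter.atTop
      (fun n => (hmeas n).aemeasurable)
    apply (MeasureTheory.ae_restrict_iff' measurableSet_Ioo).mpr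
    apply Filter.Eventually.of_forall
    intro x hx
    have htend : Filter.Tendsto (fun n : ℕ => r / ((n:ℝ) + 2)) Filter.atTop (𝓝 0) :=
      Filter.Tendsto.div_atTop tendsto_const_nhds
        (Filter.tendsto_atTop_add_const_right _ 2 tendsto_natCast_atTop_atTop)
    have hev : ∀ᶠ n : ℕ in Filter.atTop, r / ((n:ℝ) + 2) < x :=
      htend.eventually_lt_const hx.1
    refine Filter.Tendsto.congr' ?_
      (tendsto_const_nhds : Filter.Tendsto (fun _ : ℕ => h x) Filter.atTop (𝓝 (h x)))
    filter_upwards [hev] with n hn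
    rw [max_eq_left hn.le]
  set h₀ : ℝ → ℝ := haemeas.mk h with hh₀def
  have hh₀meas : Measurable h₀ := haemeas.measurable_mk
  have hhae : h =ᵐ[volume.restrict (Set.Ioo (0:ℝ) r)] h₀ := haemeas.ae_eq_mk
  have hN : volume.restrict (Set.Ioo (0:ℝ) r) {x | ¬ h x = h₀ x} = 0 :=
    MeasureTheory.ae_iff.mp hhae
  -- the two measures
  have hdens1meas : Measurable (fun t : ℝ => ENNReal.ofReal (Wf w t / t)) :=
    ((aux_Wf_measurable hw).div measurable_id).ennreal_ofReal
  have hwint : MeasureTheory.IntegrableOn w (Set.Ioo (0:ℝ) r) volume := hw.2 r hr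
  have hwaem : AEMeasurable w (volume.restrict (Set.Ioo (0:ℝ) r)) :=
    hwint.aestronglyMeasurable.aemeasurable
  set w' : ℝ → ℝ := hwaem.mk w with hw'def
  have hw'meas : Measurable w' := hwaem.measurable_mk
  have hww' : w =ᵐ[volume.restrict (Set.Ioo (0:ℝ) r)] w' := hwaem.ae_eq_mk
  set μ₁ := (volume.restrict (Set.Ioo (0:ℝ) r)).withDensity
    (fun t : ℝ => ENNReal.ofReal (Wf w t / t)) with hμ₁
  set μ₂ := (volume.restrict (Set.Ioo (0:ℝ) r)).withDensity
    (fun t : ℝ => ENNReal.ofReal (w' t)) with hμ₂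
  have hac1 : μ₁ ≪ volume.restrict (Set.Ioo (0:ℝ) r) :=
    MeasureTheory.withDensity_absolutelyContinuous _ _
  have hac2 : μ₂ ≪ volume.restrict (Set.Ioo (0:ℝ) r) :=
    MeasureTheory.withDensity_absolutelyContinuous _ _
  have hout1 : μ₁ ((Set.Ioo (0:ℝ) r)ᶜ) = 0 := by
    rw [hμ₁, MeasureTheory.withDensity_apply _ measurableSet_Ioo.compl,
      MeasureTheory.Measure.restrict_restrict measurableSet_Ioo.compl]
    simp
  -- the level-set comparison
  have hlevel : ∀ lam : ℝ, μ₁ {x | lam < h₀ x} ≤ ENNReal.ofReal CB * μ₂ {x | lam < h₀ x} := by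
    intro lam
    have hμ₁N : μ₁ {x | ¬ h x = h₀ x} = 0 := hac1 hN
    have hμ₂N : μ₂ {x | ¬ h x = h₀ x} = 0 := hac2 hN
    have hT₀sub : {x | lam < h₀ x} ∩ Set.Ioo 0 r ⊆
        ({x | lam < h x} ∩ Set.Ioo 0 r) ∪ {x | ¬ h x = h₀ x} := by
      rintro x ⟨hx1, hx2⟩
      by_cases hxe : h x = h₀ x
      · exact Or.inl ⟨by rw [Set.mem_setOf_eq, hxe]; exact hx1, hx2⟩
      · exact Or.inr hxe
    have hsplit1 : μ₁ {x | lam < h₀ x} ≤ μ₁ ({x | lam < h₀ x} ∩ Set.Ioo 0 r) := by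
      have h1 : μ₁ {x | lam < h₀ x} ≤
          μ₁ ({x | lam < h₀ x} ∩ Set.Ioo 0 r) + μ₁ ((Set.Ioo (0:ℝ) r)ᶜ) := by
        refine (measure_mono ?_).trans (measure_union_le _ _)
        intro x hx
        by_cases hx2 : x ∈ Set.Ioo (0:ℝ) r
        · exact Or.inl ⟨hx, hx2⟩
        · exact Or.inr hx2
      rwa [hout1, add_zero] at h1
    rcases Set.eq_empty_or_nonempty ({x | lam < h x} ∩ Set.Ioo 0 r) with hSe | hSne
    · have h2 : μ₁ ({x | lam < h₀ x} ∩ Set.Ioo 0 r) ≤ μ₁ {x | ¬ h x = h₀ x} := by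
        apply measure_mono
        intro x hx
        rcases hT₀sub hx with h1 | h1
        · rw [hSe] at h1; exact absurd h1 (Set.notMem_empty x)
        · exact h1
      calc μ₁ {x | lam < h₀ x} ≤ μ₁ {x | ¬ h x = h₀ x} := hsplit1.trans h2
        _ = 0 := hμ₁N
        _ ≤ _ := zero_le
    · obtain ⟨s₀, hs₀⟩ := hSne
      have hSbdd : BddAbove ({x | lam < h x} ∩ Set.Ioo 0 r) := ⟨r, fun x hx => hx.2.2.le⟩
      set m : ℝ := sSup ({x | lam < h x} ∩ Set.Ioo 0 r) with hmdef
      have hm0 : 0 < m := lt_of_lt_of_le hs₀.2.1 (le_csSup hSbdd hs₀)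
      have hmr : m ≤ r := csSup_le ⟨s₀, hs₀⟩ fun x hx => hx.2.2.le
      have hSIoc : {x | lam < h x} ∩ Set.Ioo 0 r ⊆ Set.Ioc 0 m :=
        fun x hx => ⟨hx.2.1, le_csSup hSbdd hx⟩
      have hIooS : Set.Ioo 0 m ⊆ {x | lam < h x} ∩ Set.Ioo 0 r := by
        intro x hx
        obtain ⟨s, hs, hxs⟩ := exists_lt_of_lt_csSup ⟨s₀, hs₀⟩ hx.2
        refine ⟨?_, hx.1, hxs.trans hs.2.2⟩
        have hmono := hanti (Set.mem_Ioi.mpr hx.1) (Set.mem_Ioi.mpr hs.2.1) hxs.le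
        exact lt_of_lt_of_le hs.1 hmono
      have hup : μ₁ {x | lam < h₀ x} ≤ ENNReal.ofReal (CB * Wf w m) := by
        have h1 : μ₁ ({x | lam < h₀ x} ∩ Set.Ioo 0 r) ≤
            μ₁ (Set.Ioc 0 m) + μ₁ {x | ¬ h x = h₀ x} := by
          refine (measure_mono ?_).trans (measure_union_le _ _)
          intro x hx
          rcases hT₀sub hx with h1 | h1
          exacts [Or.inl (hSIoc h1), Or.inr h1]
        rw [hμ₁N, add_zero] at h1
        have h2 : μ₁ (Set.Ioc 0 m) ≤ ENNReal.ofReal (CB * Wf w m) := by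
          rw [hμ₁, MeasureTheory.withDensity_apply _ measurableSet_Ioc,
            MeasureTheory.Measure.restrict_restrict measurableSet_Ioc]
          have haeset : (Set.Ioc (0:ℝ) m ∩ Set.Ioo 0 r : Set ℝ)
              =ᵐ[volume] (Set.Ioo (0:ℝ) m : Set ℝ) := by
            apply MeasureTheory.ae_eq_set.mpr
            constructor
            · have hsub : (Set.Ioc (0:ℝ) m ∩ Set.Ioo 0 r) \ Set.Ioo 0 m ⊆ ({m} : Set ℝ) := by
                intro x hx
                obtain ⟨⟨hIoc, hIoo⟩, hnot⟩ := hx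
                simp only [Set.mem_Ioo, not_and, not_lt] at hnot
                exact Set.mem_singleton_iff.mpr (le_antisymm hIoc.2 (hnot hIoc.1))
              exact measure_mono_null hsub Real.volume_singleton
            · have hzero : Set.Ioo (0:ℝ) m \ (Set.Ioc (0:ℝ) m ∩ Set.Ioo 0 r) ⊆ (∅ : Set ℝ) := by
                intro x hx
                obtain ⟨hIoo, hnot⟩ := hx
                exact absurd ⟨⟨hIoo.1, hIoo.2.le⟩, hIoo.1, hIoo.2.trans_le hmr⟩ hnot
              exact measure_mono_null hzero measure_empty
          rw [MeasureTheory.setLIntegral_congr haeset]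
          exact hB m hm0
        exact (hsplit1.trans h1).trans h2
      have hlow : ENNReal.ofReal (Wf w m) ≤ μ₂ {x | lam < h₀ x} := by
        have hsub2 : Set.Ioo 0 m ⊆ {x | lam < h₀ x} ∪ {x | ¬ h x = h₀ x} := by
          intro x hx
          have hxS := hIooS hx
          by_cases hxe : h x = h₀ x
          · exact Or.inl (by rw [Set.mem_setOf_eq, ← hxe]; exact hxS.1)
          · exact Or.inr hxe
        have h3 : μ₂ (Set.Ioo 0 m) ≤ μ₂ {x | lam < h₀ x} + μ₂ {x | ¬ h x = h₀ x} :=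
          (measure_mono hsub2).trans (measure_union_le _ _)
        rw [hμ₂N, add_zero] at h3
        refine le_trans (le_of_eq ?_) h3
        rw [hμ₂, MeasureTheory.withDensity_apply _ measurableSet_Ioo,
          MeasureTheory.Measure.restrict_restrict measurableSet_Ioo,
          Set.inter_eq_self_of_subset_left (Set.Ioo_subset_Ioo_right hmr)]
        have hwm : MeasureTheory.IntegrableOn w (Set.Ioo (0:ℝ) m) volume :=
          hwint.mono_set (Set.Ioo_subset_Ioo_right hmr)
        have hwev : w =ᵐ[volume.restrict (Set.Ioo (0:ℝ) m)] w' :=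
          MeasureTheory.ae_restrict_of_ae_restrict_of_subset
            (Set.Ioo_subset_Ioo_right hmr) hww'
        rw [show (∫⁻ x in Set.Ioo (0:ℝ) m, ENNReal.ofReal (w' x))
            = ∫⁻ x in Set.Ioo (0:ℝ) m, ENNReal.ofReal (w x) from
          MeasureTheory.lintegral_congr_ae ((hwev.symm).mono fun x hx => congrArg ENNReal.ofReal hx)]
        rw [Wf]
        exact MeasureTheory.ofReal_integral_eq_lintegral_ofReal hwm
          ((MeasureTheory.ae_restrict_iff' measurableSet_Ioo).mpr
            (Filter.Eventually.of_forall fun x hx => (hw.1 x hx.1).le))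
      calc μ₁ {x | lam < h₀ x} ≤ ENNReal.ofReal (CB * Wf w m) := hup
        _ = ENNReal.ofReal CB * ENNReal.ofReal (Wf w m) := ENNReal.ofReal_mul hCB.le
        _ ≤ ENNReal.ofReal CB * μ₂ {x | lam < h₀ x} := mul_le_mul_right hlow _
  -- layer cake identities
  have hhae1 : h =ᵐ[μ₁] h₀ := hhae.filter_mono hac1.ae_le
  have hhae2 : h =ᵐ[μ₂] h₀ := hhae.filter_mono hac2.ae_le
  have hnn1 : 0 ≤ᵐ[μ₁] h₀ := hhae1.mono fun x hx => hx ▸ hhnn x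
  have hnn2 : 0 ≤ᵐ[μ₂] h₀ := hhae2.mono fun x hx => hx ▸ hhnn x
  have LC1 := MeasureTheory.lintegral_eq_lintegral_meas_lt μ₁ hnn1 hh₀meas.aemeasurable
  have LC2 := MeasureTheory.lintegral_eq_lintegral_meas_lt μ₂ hnn2 hh₀meas.aemeasurable
  have WD1 : (∫⁻ x, ENNReal.ofReal (h₀ x) ∂μ₁) =
      ∫⁻ t in Set.Ioo (0:ℝ) r, ENNReal.ofReal (Wf w t / t) * ENNReal.ofReal (h₀ t) := by
    rw [hμ₁, MeasureTheory.lintegral_withDensity_eq_lintegral_mul_non_measurable _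
      hdens1meas (Filter.Eventually.of_forall fun x => ENNReal.ofReal_lt_top)]
    rfl
  have WD2 : (∫⁻ x, ENNReal.ofReal (h₀ x) ∂μ₂) =
      ∫⁻ t in Set.Ioo (0:ℝ) r, ENNReal.ofReal (w' t) * ENNReal.ofReal (h₀ t) := by
    rw [hμ₂, MeasureTheory.lintegral_withDensity_eq_lintegral_mul_non_measurable _
      hw'meas.ennreal_ofReal (Filter.Eventually.of_forall fun x => ENNReal.ofReal_lt_top)]
    rfl
  -- step 1 : pointwise comparison with the weighted integrand
  have step1 : (∫⁻ t in Set.Ioo (0:ℝ) r, ENNReal.ofReal ((phiI u a b t / t) ^ p')) ≤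
      ENNReal.ofReal ((C₀ * (Wf w r / r)) ^ (p' - 1)) *
        ∫⁻ t in Set.Ioo (0:ℝ) r,
          ENNReal.ofReal (Wf w t / t) * ENNReal.ofReal ((phiI u a b t / Wf w t) ^ p') := by
    rw [← MeasureTheory.lintegral_const_mul' _ _ ENNReal.ofReal_ne_top]
    apply MeasureTheory.lintegral_mono_ae
    apply (MeasureTheory.ae_restrict_iff' measurableSet_Ioo).mpr
    apply Filter.Eventually.of_forall
    intro t ht
    have ht0 : 0 < t := ht.1
    have hWt : 0 < Wf w t := aux_Wf_pos hw ht0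
    have hA1nn : (0:ℝ) ≤ (C₀ * (Wf w r / r)) ^ (p' - 1) := Real.rpow_nonneg (by positivity) _
    have e2 : (phiI u a b t / t) ^ p'
        = (phiI u a b t / Wf w t) ^ p' * ((Wf w t / t) ^ (p' - 1) * (Wf w t / t)) := by
      have e1 : phiI u a b t / t = (phiI u a b t / Wf w t) * (Wf w t / t) := by
        field_simp
      rw [e1, Real.mul_rpow (div_nonneg (hφnn t) hWt.le) (by positivity)]
      congr 1
      rw [← Real.rpow_add_one (ne_of_gt (by positivity : (0:ℝ) < Wf w t / t)), sub_add_cancel]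
    have e4 : (Wf w t / t) ^ (p' - 1) ≤ (C₀ * (Wf w r / r)) ^ (p' - 1) :=
      Real.rpow_le_rpow (by positivity) (hqi' t r ht0 ht.2.le) (by linarith)
    calc ENNReal.ofReal ((phiI u a b t / t) ^ p')
        ≤ ENNReal.ofReal ((C₀ * (Wf w r / r)) ^ (p' - 1)
            * ((Wf w t / t) * (phiI u a b t / Wf w t) ^ p')) := by
          apply ENNReal.ofReal_le_ofReal
          rw [e2]
          nlinarith [hQnn t, mul_le_mul_of_nonneg_left e4
            (mul_nonneg (hQnn t) (by positivity : (0:ℝ) ≤ Wf w t / t))]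
      _ = ENNReal.ofReal ((C₀ * (Wf w r / r)) ^ (p' - 1)) *
            (ENNReal.ofReal (Wf w t / t) * ENNReal.ofReal ((phiI u a b t / Wf w t) ^ p')) := by
          rw [ENNReal.ofReal_mul hA1nn, ENNReal.ofReal_mul (by positivity : (0:ℝ) ≤ Wf w t / t)]
  -- step 2 : replace Q by its envelope h₀
  have step2 : (∫⁻ t in Set.Ioo (0:ℝ) r,
        ENNReal.ofReal (Wf w t / t) * ENNReal.ofReal ((phiI u a b t / Wf w t) ^ p')) ≤
      ∫⁻ t in Set.Ioo (0:ℝ) r, ENNReal.ofReal (Wf w t / t) * ENNReal.ofReal (h₀ t) := by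
    apply MeasureTheory.lintegral_mono_ae
    filter_upwards [hhae, MeasureTheory.ae_restrict_mem measurableSet_Ioo] with t hte htm
    exact mul_le_mul_right (ENNReal.ofReal_le_ofReal
      (by rw [← hte]; exact hQh t htm.1 htm.2)) _
  -- step 5-6 : level sets comparison integrated
  have step56 : (∫⁻ lam in Set.Ioi (0:ℝ), μ₁ {x | lam < h₀ x}) ≤
      ENNReal.ofReal CB * ∫⁻ lam in Set.Ioi (0:ℝ), μ₂ {x | lam < h₀ x} := by
    rw [← MeasureTheory.lintegral_const_mul' _ _ ENNReal.ofReal_ne_top]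
    exact MeasureTheory.lintegral_mono fun lam => hlevel lam
  -- step 9 : back to the w-weighted integral
  have step9 : (∫⁻ t in Set.Ioo (0:ℝ) r, ENNReal.ofReal (w' t) * ENNReal.ofReal (h₀ t)) ≤
      ENNReal.ofReal ((2*C₀) ^ p') *
        ∫⁻ t in Set.Ioo (0:ℝ) r, ENNReal.ofReal ((phiI u a b t / Wf w t) ^ p' * w t) := by
    rw [← MeasureTheory.lintegral_const_mul' _ _ ENNReal.ofReal_ne_top]
    apply MeasureTheory.lintegral_mono_ae
    filter_upwards [hhae, hww', MeasureTheory.ae_restrict_mem measurableSet_Ioo]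
      with t hte htw htm
    rw [← hte, ← htw]
    have hwt : 0 ≤ w t := (hw.1 t htm.1).le
    have h2 := hhub t htm.1
    have h1 : w t * h t ≤ (2*C₀) ^ p' * ((phiI u a b t / Wf w t) ^ p' * w t) := by
      nlinarith [hhnn t, Real.rpow_nonneg (by positivity : (0:ℝ) ≤ 2*C₀) p']
    calc ENNReal.ofReal (w t) * ENNReal.ofReal (h t) = ENNReal.ofReal (w t * h t) :=
          (ENNReal.ofReal_mul hwt).symm
      _ ≤ ENNReal.ofReal ((2*C₀) ^ p' * ((phiI u a b t / Wf w t) ^ p' * w t)) :=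
          ENNReal.ofReal_le_ofReal h1
      _ = ENNReal.ofReal ((2*C₀) ^ p') *
            ENNReal.ofReal ((phiI u a b t / Wf w t) ^ p' * w t) :=
          ENNReal.ofReal_mul (Real.rpow_nonneg (by positivity) _)
  -- assemble the full chain
  have hK2nn : (0:ℝ) ≤ (2*C₀) ^ p' := Real.rpow_nonneg (by positivity) _
  have hA1nn : (0:ℝ) ≤ (C₀ * (Wf w r / r)) ^ (p' - 1) := Real.rpow_nonneg (by positivity) _
  have hAnn : (0:ℝ) ≤ (C₀ * (Wf w r / r)) ^ (p' - 1) * (CB * (2*C₀) ^ p') :=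
    mul_nonneg hA1nn (mul_nonneg hCB.le hK2nn)
  have hfinal : (∫⁻ t in Set.Ioo (0:ℝ) r, ENNReal.ofReal ((phiI u a b t / t) ^ p')) ≤
      ENNReal.ofReal ((C₀ * (Wf w r / r)) ^ (p' - 1) * (CB * (2*C₀) ^ p')) *
        ∫⁻ t in Set.Ioo (0:ℝ) r, ENNReal.ofReal ((phiI u a b t / Wf w t) ^ p' * w t) := by
    calc (∫⁻ t in Set.Ioo (0:ℝ) r, ENNReal.ofReal ((phiI u a b t / t) ^ p'))
        ≤ ENNReal.ofReal ((C₀ * (Wf w r / r)) ^ (p' - 1)) *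
            ∫⁻ t in Set.Ioo (0:ℝ) r,
              ENNReal.ofReal (Wf w t / t) * ENNReal.ofReal ((phiI u a b t / Wf w t) ^ p') :=
          step1
      _ ≤ ENNReal.ofReal ((C₀ * (Wf w r / r)) ^ (p' - 1)) *
            ∫⁻ t in Set.Ioo (0:ℝ) r, ENNReal.ofReal (Wf w t / t) * ENNReal.ofReal (h₀ t) :=
          mul_le_mul_right step2 _
      _ = ENNReal.ofReal ((C₀ * (Wf w r / r)) ^ (p' - 1)) *
            ∫⁻ lam in Set.Ioi (0:ℝ), μ₁ {x | lam < h₀ x} := by rw [← WD1, LC1]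
      _ ≤ ENNReal.ofReal ((C₀ * (Wf w r / r)) ^ (p' - 1)) *
            (ENNReal.ofReal CB * ∫⁻ lam in Set.Ioi (0:ℝ), μ₂ {x | lam < h₀ x}) :=
          mul_le_mul_right step56 _
      _ = ENNReal.ofReal ((C₀ * (Wf w r / r)) ^ (p' - 1)) *
            (ENNReal.ofReal CB *
              ∫⁻ t in Set.Ioo (0:ℝ) r, ENNReal.ofReal (w' t) * ENNReal.ofReal (h₀ t)) := by
          rw [← LC2, WD2]
      _ ≤ ENNReal.ofReal ((C₀ * (Wf w r / r)) ^ (p' - 1)) *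
            (ENNReal.ofReal CB * (ENNReal.ofReal ((2*C₀) ^ p') *
              ∫⁻ t in Set.Ioo (0:ℝ) r,
                ENNReal.ofReal ((phiI u a b t / Wf w t) ^ p' * w t))) :=
          mul_le_mul_right (mul_le_mul_right step9 _) _
      _ = ENNReal.ofReal ((C₀ * (Wf w r / r)) ^ (p' - 1) * (CB * (2*C₀) ^ p')) *
            ∫⁻ t in Set.Ioo (0:ℝ) r,
              ENNReal.ofReal ((phiI u a b t / Wf w t) ^ p' * w t) := by
          rw [ENNReal.ofReal_mul hA1nn, ENNReal.ofReal_mul hCB.le]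
          ring
  -- raise to the power (p-1)/p and conclude
  have hgoal1 : (∫⁻ t in Set.Ioo (0:ℝ) r,
        ENNReal.ofReal ((phiI u a b t / t) ^ p')) ^ ((p-1)/p)
      ≤ ENNReal.ofReal (((C₀ * (Wf w r / r)) ^ (p' - 1) * (CB * (2*C₀) ^ p')) ^ ((p-1)/p)
          * (C * (b-a) / Wf w r ^ (1/p))) := by
    calc (∫⁻ t in Set.Ioo (0:ℝ) r,
          ENNReal.ofReal ((phiI u a b t / t) ^ p')) ^ ((p-1)/p)
        ≤ (ENNReal.ofReal ((C₀ * (Wf w r / r)) ^ (p' - 1) * (CB * (2*C₀) ^ p')) *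
            ∫⁻ t in Set.Ioo (0:ℝ) r,
              ENNReal.ofReal ((phiI u a b t / Wf w t) ^ p' * w t)) ^ ((p-1)/p) :=
          ENNReal.rpow_le_rpow hfinal hq0.le
      _ = ENNReal.ofReal ((C₀ * (Wf w r / r)) ^ (p' - 1) * (CB * (2*C₀) ^ p')) ^ ((p-1)/p) *
            (∫⁻ t in Set.Ioo (0:ℝ) r,
              ENNReal.ofReal ((phiI u a b t / Wf w t) ^ p' * w t)) ^ ((p-1)/p) :=
          ENNReal.mul_rpow_of_nonneg _ _ hq0.le
      _ ≤ ENNReal.ofReal ((C₀ * (Wf w r / r)) ^ (p' - 1) * (CB * (2*C₀) ^ p')) ^ ((p-1)/p) *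
            ENNReal.ofReal (C * (b-a) / Wf w r ^ (1/p)) :=
          mul_le_mul_right (hm a b hab) _
      _ = _ := by
          rw [ENNReal.ofReal_rpow_of_nonneg hAnn hq0.le,
            ← ENNReal.ofReal_mul (Real.rpow_nonneg hAnn _)]
  refine hgoal1.trans (ENNReal.ofReal_le_ofReal (le_of_eq ?_))
  -- final real computation
  have hWrp : (0:ℝ) < Wf w r ^ (1/p) := Real.rpow_pos_of_pos hWr _
  have hrp : (0:ℝ) < r ^ (1/p) := Real.rpow_pos_of_pos hr _
  have hsplitA : ((C₀ * (Wf w r / r)) ^ (p' - 1) * (CB * (2*C₀) ^ p')) ^ ((p-1)/p)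
      = (C₀ ^ (1/p) * (Wf w r ^ (1/p) / r ^ (1/p))) * (CB ^ ((p-1)/p) * (2*C₀)) := by
    rw [Real.mul_rpow hA1nn (mul_nonneg hCB.le hK2nn),
      Real.mul_rpow hCB.le hK2nn,
      ← Real.rpow_mul (by positivity : (0:ℝ) ≤ C₀ * (Wf w r / r)),
      ← Real.rpow_mul (by positivity : (0:ℝ) ≤ 2*C₀)]
    rw [show (p' - 1) * ((p-1)/p) = 1/p by rw [hp'def]; field_simp; ring,
      show p' * ((p-1)/p) = 1 by rw [hp'def]; field_simp,
      Real.rpow_one,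
      Real.mul_rpow hC₀.le (by positivity : (0:ℝ) ≤ Wf w r / r),
      Real.div_rpow hWr.le hr.le]
  rw [hsplitA]
  field_simp

end
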